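/- Let q be an odd prime, r ≥ 0 an integer, and c = 2^η·d with η ≥ 4, d an odd positive integer, and gcd(q,d) = 1. If B_r(n,m;c) ≠ 0 for integers n, m, then 4 divides gcd(n,m) and gcd(n,c) = gcd(m,c). -/

import Mathlib

/-- `e(x) = exp(2πix)`. -/
noncomputable def eC (x : ℝ) : ℂ := Complex.exp (2 * (Real.pi : ℂ) * Complex.I * (x : ℂ))

/-- The Kloosterman sum `S(a,b;c) = Σ_{x ∈ (ℤ/cℤ)ˣ} e((a·x + b·x̄)/c)`. -/
noncomputable def kloos (a b : ℤ) (c : ℕ) : ℂ :=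
  ∑ x ∈ Finset.range c,
    if Nat.Coprime x c then
      eC (((a * (x : ℤ) + b * ((((x : ZMod c)⁻¹).val : ℕ) : ℤ) : ℤ) : ℝ) / (c : ℝ))
    else 0

/-- `B_r(n,m;c) = Σ_{α,β mod c} e(−2uαβ/c)·S(uα², uβ²; c)·e((αn + βm)/c)`, where `u` is an
inverse of `q^{4+r}` modulo `c` (passed as a parameter). -/
noncomputable def Bsum (u : ℤ) (n m : ℤ) (c : ℕ) : ℂ :=
  ∑ α ∈ Finset.range c, ∑ β ∈ Finset.range c,
    eC ((((-2) * u * (α : ℤ) * (β : ℤ) : ℤ) : ℝ) / (c : ℝ)) *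
      kloos (u * (α : ℤ) ^ 2) (u * (β : ℤ) ^ 2) c *
      eC ((((α : ℤ) * n + (β : ℤ) * m : ℤ) : ℝ) / (c : ℝ))

section Aux

variable {c : ℕ} [NeZero c]

lemma eC_int_div (a : ℤ) :
    eC ((a : ℝ) / (c : ℝ)) = ZMod.stdAddChar (a : ZMod c) := by
  rw [ZMod.stdAddChar_coe, eC]
  congr 1
  push_cast
  ring

noncomputable def Kz (c : ℕ) [NeZero c] (a b : ZMod c) : ℂ :=
  ∑ x : (ZMod c)ˣ,
    ZMod.stdAddChar (a * (x : ZMod c) + b * ((x⁻¹ : (ZMod c)ˣ) : ZMod c))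

lemma sum_range_zmod (f : ZMod c → ℂ) :
    ∑ i ∈ Finset.range c, f (i : ZMod c) = ∑ z : ZMod c, f z := by
  rw [← Fin.sum_univ_eq_sum_range (fun i : ℕ => f (i : ZMod c)) c]
  refine Function.Bijective.sum_comp ⟨?_, ?_⟩ f
  · intro i j hij
    apply Fin.ext
    rw [← ZMod.val_cast_of_lt i.isLt, ← ZMod.val_cast_of_lt j.isLt]
    exact congrArg ZMod.val hij
  · intro z
    exact ⟨⟨z.val, z.val_lt⟩, ZMod.natCast_rightInverse z⟩

lemma kloos_eq_Kz (a b : ℤ) : kloos a b c = Kz c (a : ZMod c) (b : ZMod c) := by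
  unfold kloos
  have step1 : ∀ i ∈ Finset.range c, (if Nat.Coprime i c then
      eC (((a * (i : ℤ) + b * ((((i : ZMod c)⁻¹).val : ℕ) : ℤ) : ℤ) : ℝ) / (c : ℝ)) else 0)
      = (if IsUnit ((i : ℕ) : ZMod c) then
          ZMod.stdAddChar ((a : ZMod c) * ((i : ℕ) : ZMod c)
            + (b : ZMod c) * ((i : ℕ) : ZMod c)⁻¹) else 0) := by
    intro i _
    by_cases h : Nat.Coprime i c
    · rw [if_pos h, if_pos ((ZMod.isUnit_iff_coprime i c).mpr h), eC_int_div]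
      congr 1
      push_cast
      rw [ZMod.natCast_val, ZMod.cast_id]
    · rw [if_neg h, if_neg (fun hu => h ((ZMod.isUnit_iff_coprime i c).mp hu))]
  have step3 : ∀ x : (ZMod c)ˣ,
      ZMod.stdAddChar ((a : ZMod c) * (x : ZMod c) + (b : ZMod c) * ((x⁻¹ : (ZMod c)ˣ) : ZMod c))
      = (if IsUnit (x : ZMod c) then
          ZMod.stdAddChar ((a : ZMod c) * (x : ZMod c) + (b : ZMod c) * (x : ZMod c)⁻¹) else 0) := by
    intro x
    rw [if_pos x.isUnit, ZMod.inv_coe_unit]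
  calc ∑ i ∈ Finset.range c, (if Nat.Coprime i c then
      eC (((a * (i : ℤ) + b * ((((i : ZMod c)⁻¹).val : ℕ) : ℤ) : ℤ) : ℝ) / (c : ℝ)) else 0)
      = ∑ i ∈ Finset.range c, (fun z : ZMod c => if IsUnit z then
          ZMod.stdAddChar ((a : ZMod c) * z + (b : ZMod c) * z⁻¹) else 0) ((i : ℕ) : ZMod c) :=
        Finset.sum_congr rfl step1
    _ = ∑ z : ZMod c, (if IsUnit z then
          ZMod.stdAddChar ((a : ZMod c) * z + (b : ZMod c) * z⁻¹) else 0) :=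
        sum_range_zmod (fun z : ZMod c => if IsUnit z then
          ZMod.stdAddChar ((a : ZMod c) * z + (b : ZMod c) * z⁻¹) else 0)
    _ = Kz c (a : ZMod c) (b : ZMod c) :=
        (Finset.sum_of_injOn (fun x : (ZMod c)ˣ => (x : ZMod c))
          Units.val_injective.injOn (fun x _ => Finset.mem_univ _)
          (fun z _ hz => if_neg (fun hu => hz
            ⟨hu.unit, Finset.mem_coe.mpr (Finset.mem_univ _), hu.unit_spec⟩))
          (fun x _ => step3 x)).symm

noncomputable def Bz (c : ℕ) [NeZero c] (u n m : ℤ) : ℂ :=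
  ∑ α : ZMod c, ∑ β : ZMod c,
    ZMod.stdAddChar (-2 * (u : ZMod c) * α * β) *
      Kz c ((u : ZMod c) * α ^ 2) ((u : ZMod c) * β ^ 2) *
      ZMod.stdAddChar (α * (n : ZMod c) + β * (m : ZMod c))

lemma Bsum_eq_Bz (u n m : ℤ) : Bsum u n m c = Bz c u n m := by
  unfold Bsum Bz
  have key : ∀ i j : ℕ,
      eC ((((-2) * u * (i : ℤ) * (j : ℤ) : ℤ) : ℝ) / (c : ℝ)) *
        kloos (u * (i : ℤ) ^ 2) (u * (j : ℤ) ^ 2) c *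
        eC ((((i : ℤ) * n + (j : ℤ) * m : ℤ) : ℝ) / (c : ℝ))
      = ZMod.stdAddChar (-2 * (u : ZMod c) * ((i : ℕ) : ZMod c) * ((j : ℕ) : ZMod c)) *
          Kz c ((u : ZMod c) * ((i : ℕ) : ZMod c) ^ 2) ((u : ZMod c) * ((j : ℕ) : ZMod c) ^ 2) *
          ZMod.stdAddChar (((i : ℕ) : ZMod c) * (n : ZMod c) + ((j : ℕ) : ZMod c) * (m : ZMod c)) := by
    intro i j
    rw [eC_int_div, eC_int_div, kloos_eq_Kz]
    push_cast
    ring_nf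
  calc ∑ i ∈ Finset.range c, ∑ j ∈ Finset.range c,
        eC ((((-2) * u * (i : ℤ) * (j : ℤ) : ℤ) : ℝ) / (c : ℝ)) *
        kloos (u * (i : ℤ) ^ 2) (u * (j : ℤ) ^ 2) c *
        eC ((((i : ℤ) * n + (j : ℤ) * m : ℤ) : ℝ) / (c : ℝ))
      = ∑ i ∈ Finset.range c, ∑ j ∈ Finset.range c,
          ZMod.stdAddChar (-2 * (u : ZMod c) * ((i : ℕ) : ZMod c) * ((j : ℕ) : ZMod c)) *
          Kz c ((u : ZMod c) * ((i : ℕ) : ZMod c) ^ 2) ((u : ZMod c) * ((j : ℕ) : ZMod c) ^ 2) *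
          ZMod.stdAddChar (((i : ℕ) : ZMod c) * (n : ZMod c) + ((j : ℕ) : ZMod c) * (m : ZMod c)) := by
        exact Finset.sum_congr rfl fun i _ => Finset.sum_congr rfl fun j _ => key i j
    _ = ∑ i ∈ Finset.range c, ∑ w : ZMod c,
          ZMod.stdAddChar (-2 * (u : ZMod c) * ((i : ℕ) : ZMod c) * w) *
          Kz c ((u : ZMod c) * ((i : ℕ) : ZMod c) ^ 2) ((u : ZMod c) * w ^ 2) *
          ZMod.stdAddChar (((i : ℕ) : ZMod c) * (n : ZMod c) + w * (m : ZMod c)) := by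
        refine Finset.sum_congr rfl fun i _ => sum_range_zmod (fun w : ZMod c =>
          ZMod.stdAddChar (-2 * (u : ZMod c) * ((i : ℕ) : ZMod c) * w) *
          Kz c ((u : ZMod c) * ((i : ℕ) : ZMod c) ^ 2) ((u : ZMod c) * w ^ 2) *
          ZMod.stdAddChar (((i : ℕ) : ZMod c) * (n : ZMod c) + w * (m : ZMod c)))
    _ = ∑ z : ZMod c, ∑ w : ZMod c,
          ZMod.stdAddChar (-2 * (u : ZMod c) * z * w) *
          Kz c ((u : ZMod c) * z ^ 2) ((u : ZMod c) * w ^ 2) *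
          ZMod.stdAddChar (z * (n : ZMod c) + w * (m : ZMod c)) :=
        sum_range_zmod (fun z : ZMod c => ∑ w : ZMod c,
          ZMod.stdAddChar (-2 * (u : ZMod c) * z * w) *
          Kz c ((u : ZMod c) * z ^ 2) ((u : ZMod c) * w ^ 2) *
          ZMod.stdAddChar (z * (n : ZMod c) + w * (m : ZMod c)))

end Aux

section Shift

variable {c : ℕ} [NeZero c]

lemma Kz_shift (t : ZMod c) (hodd : ∀ x : (ZMod c)ˣ, 2 * t * (x : ZMod c) = 2 * t)
    (a b s s' : ZMod c) :
    Kz c (a + 2 * t * s) (b + 2 * t * s') =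
      ZMod.stdAddChar (2 * t * (s + s')) * Kz c a b := by
  unfold Kz
  rw [Finset.mul_sum]
  refine Finset.sum_congr rfl fun x _ => ?_
  rw [← AddChar.map_add_eq_mul]
  congr 1
  linear_combination s * hodd x + s' * hodd x⁻¹

lemma Kz_self_eq (t : ZMod c) (h4t : 4 * t = 0)
    (hodd : ∀ x : (ZMod c)ˣ, 2 * t * (x : ZMod c) = 2 * t) (a b : ZMod c) :
    Kz c a b = ZMod.stdAddChar (2 * t * (a + b)) * Kz c a b := by
  have hw : ((1 : ZMod c) + 2 * t) * (1 + 2 * t) = 1 := by linear_combination (1 + t) * h4t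
  set w : (ZMod c)ˣ := ⟨1 + 2 * t, 1 + 2 * t, hw, hw⟩ with hwdef
  have hwv : (w : ZMod c) = 1 + 2 * t := rfl
  have hwi : ((w⁻¹ : (ZMod c)ˣ) : ZMod c) = 1 + 2 * t := rfl
  calc Kz c a b
      = ∑ x : (ZMod c)ˣ, ZMod.stdAddChar
          (a * ((x * w : (ZMod c)ˣ) : ZMod c) + b * (((x * w)⁻¹ : (ZMod c)ˣ) : ZMod c)) := by
        refine (Fintype.sum_equiv (Equiv.mulRight w)
          (fun x : (ZMod c)ˣ => ZMod.stdAddChar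
            (a * ((x * w : (ZMod c)ˣ) : ZMod c) + b * (((x * w)⁻¹ : (ZMod c)ˣ) : ZMod c)))
          (fun x : (ZMod c)ˣ => ZMod.stdAddChar
            (a * (x : ZMod c) + b * ((x⁻¹ : (ZMod c)ˣ) : ZMod c)))
          (fun x => by rw [Equiv.coe_mulRight])).symm
    _ = ∑ x : (ZMod c)ˣ, ZMod.stdAddChar (2 * t * (a + b)) * ZMod.stdAddChar
          (a * (x : ZMod c) + b * ((x⁻¹ : (ZMod c)ˣ) : ZMod c)) := by
        refine Finset.sum_congr rfl fun x _ => ?_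
        rw [← AddChar.map_add_eq_mul]
        congr 1
        have e1 := hodd x
        have e2 := hodd x⁻¹
        rw [mul_inv_rev, Units.val_mul, Units.val_mul, hwv, hwi]
        linear_combination a * e1 + b * e2
    _ = ZMod.stdAddChar (2 * t * (a + b)) * Kz c a b := by rw [← Finset.mul_sum]; rfl

lemma Kz_eq_zero (t : ZMod c) (h4t : 4 * t = 0)
    (hodd : ∀ x : (ZMod c)ˣ, 2 * t * (x : ZMod c) = 2 * t) {a b : ZMod c}
    (h : ZMod.stdAddChar (2 * t * (a + b)) ≠ 1) : Kz c a b = 0 := by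
  by_contra hK
  refine h (mul_right_cancel₀ hK ?_)
  rw [← Kz_self_eq t h4t hodd a b, one_mul]

lemma sum_char_mul_eq_zero {k : ZMod c} (hk : k ≠ 0) :
    ∑ β : ZMod c, ZMod.stdAddChar (β * k) = 0 := by
  have h2 := AddChar.sum_eq_zero_of_ne_one (ZMod.isPrimitive_stdAddChar c hk)
  simpa [AddChar.mulShift_apply, mul_comm] using h2

lemma I_zpow_eq_one {n : ℤ} (h : Complex.I ^ n = 1) : (4 : ℤ) ∣ n := by
  have h4 : Complex.I ^ (4 : ℤ) = 1 := by
    rw [show (4 : ℤ) = ((4 : ℕ) : ℤ) from rfl, zpow_natCast, Complex.I_pow_four]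
  have key : Complex.I ^ (n % 4) = 1 := by
    have hn : n = 4 * (n / 4) + n % 4 := (Int.mul_ediv_add_emod n 4).symm
    rw [hn, zpow_add₀ Complex.I_ne_zero, zpow_mul, h4, one_zpow, one_mul] at h
    exact h
  have hcases : n % 4 = 0 ∨ n % 4 = 1 ∨ n % 4 = 2 ∨ n % 4 = 3 := by omega
  rcases hcases with h0 | h0 | h0 | h0
  · omega
  · rw [h0, zpow_one] at key
    have := congrArg Complex.im key
    simp at this
  · rw [h0, show (2 : ℤ) = ((2 : ℕ) : ℤ) from rfl, zpow_natCast, Complex.I_sq] at key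
    norm_num at key
  · rw [h0, show (3 : ℤ) = ((3 : ℕ) : ℤ) from rfl, zpow_natCast, pow_succ, Complex.I_sq,
      neg_one_mul] at key
    have := congrArg Complex.im key
    simp at this

end Shift

lemma mul_Kz_mul {c : ℕ} [NeZero c] (a b A C : ZMod c) :
    ZMod.stdAddChar A * Kz c a b * ZMod.stdAddChar C
    = ∑ x : (ZMod c)ˣ, ZMod.stdAddChar
        (a * (x : ZMod c) + b * ((x⁻¹ : (ZMod c)ˣ) : ZMod c) + A + C) := by
  unfold Kz
  rw [Finset.mul_sum, Finset.sum_mul]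
  refine Finset.sum_congr rfl fun x _ => ?_
  rw [← AddChar.map_add_eq_mul, ← AddChar.map_add_eq_mul]
  congr 1
  ring

/-- if `B_r(n,m;c) ≠ 0` for `c = 2^η·d`, `η ≥ 4`, `d` odd, `gcd(q,d) = 1`,
then `4 ∣ gcd(n,m)` and `gcd(n,c) = gcd(m,c)`. -/
theorem Bsum_ne_zero_conditions (q : ℕ) (hq : q.Prime) (hqodd : Odd q) (r : ℕ)
    (η d : ℕ) (hη : 4 ≤ η) (hd : 0 < d) (hdodd : Odd d) (hqd : Nat.Coprime q d)
    (c : ℕ) (hc : c = 2 ^ η * d)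
    (u : ℤ) (hu : (q : ℤ) ^ (4 + r) * u ≡ 1 [ZMOD (c : ℤ)])
    (n m : ℤ) (hB : Bsum u n m c ≠ 0) :
    4 ∣ Int.gcd n m ∧ Int.gcd n (c : ℤ) = Int.gcd m (c : ℤ) := by
  set K := 2 ^ (η - 4) * d with hKdef
  have hK0 : K ≠ 0 := by
    rw [hKdef]
    exact Nat.mul_ne_zero (pow_ne_zero _ two_ne_zero) (by omega)
  have hc16 : c = 16 * K := by
    rw [hc, hKdef]
    conv_lhs => rw [show η = (η - 4) + 4 from by omega]
    rw [pow_add]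
    ring
  haveI : NeZero c := ⟨by rw [hc16]; exact Nat.mul_ne_zero (by norm_num) hK0⟩
  set t : ZMod c := ((4 * K : ℕ) : ZMod c) with htdef
  have hcz : ((16 * K : ℕ) : ZMod c) = 0 := by rw [← hc16]; exact ZMod.natCast_self c
  push_cast at hcz
  have h4t : 4 * t = 0 := by
    rw [htdef]; push_cast; linear_combination hcz
  have htt : t * t = 0 := by
    rw [htdef]; push_cast; linear_combination (K : ZMod c) * hcz
  have hodd : ∀ x : (ZMod c)ˣ, 2 * t * (x : ZMod c) = 2 * t := by
    intro x
    have hcop := ZMod.val_coe_unit_coprime x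
    have h2c : 2 ∣ c := ⟨8 * K, by rw [hc16]; ring⟩
    have hvodd : (x : ZMod c).val % 2 = 1 := by
      rcases Nat.even_or_odd (x : ZMod c).val with he | ho
      · exfalso
        obtain ⟨j, hj⟩ := he
        have h2g : 2 ∣ Nat.gcd (x : ZMod c).val c := Nat.dvd_gcd ⟨j, by omega⟩ h2c
        rw [Nat.Coprime] at hcop
        omega
      · exact Nat.odd_iff.mp ho
    obtain ⟨j, hj⟩ : ∃ j, (x : ZMod c).val = 2 * j + 1 := ⟨(x : ZMod c).val / 2, by omega⟩
    have hzv : (((x : ZMod c).val : ℕ) : ZMod c) = (x : ZMod c) :=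
      ZMod.natCast_rightInverse (x : ZMod c)
    have hx2 : (x : ZMod c) = 2 * (j : ZMod c) + 1 := by
      rw [← hzv, hj]; push_cast; ring
    rw [hx2]
    linear_combination (j : ZMod c) * h4t
  have h2sq : ∀ z : ZMod c, 2 * t * (z * z) = 2 * t * z := by
    intro z
    have hzv : ((z.val : ℕ) : ZMod c) = z := ZMod.natCast_rightInverse z
    obtain ⟨w, hw⟩ := Nat.even_mul_succ_self z.val
    have hcast := congrArg (Nat.cast : ℕ → ZMod c) hw
    push_cast at hcast
    rw [hzv] at hcast
    linear_combination 2 * t * hcast + ((w : ZMod c) - z) * h4t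
  have huu : ((q : ZMod c)) ^ (4 + r) * (u : ZMod c) = 1 := by
    have h1 := (ZMod.intCast_eq_intCast_iff _ _ _).mpr hu
    push_cast at h1
    exact h1
  have hu_unit : IsUnit ((u : ZMod c)) := IsUnit.of_mul_eq_one _ (by rw [mul_comm]; exact huu)
  have hut : 2 * t * (u : ZMod c) = 2 * t := by
    have h1 := hodd hu_unit.unit
    rwa [hu_unit.unit_spec] at h1
  have husq : ∀ z : ZMod c, 2 * t * ((u : ZMod c) * z ^ 2) = 2 * t * ((u : ZMod c) * z) := by
    intro z
    linear_combination (z ^ 2 - z) * hut + h2sq z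
  set F : ZMod c → ZMod c → ℂ := fun α β =>
    ZMod.stdAddChar (-2 * (u : ZMod c) * α * β) *
      Kz c ((u : ZMod c) * α ^ 2) ((u : ZMod c) * β ^ 2) *
      ZMod.stdAddChar (α * (n : ZMod c) + β * (m : ZMod c)) with hF
  have hBz : Bz c u n m = ∑ α : ZMod c, ∑ β : ZMod c, F α β := rfl
  have hBz0 : Bz c u n m ≠ 0 := by rw [← Bsum_eq_Bz]; exact hB
  -- α-shift
  have hshifta : ∀ α β : ZMod c, F (α + t) β = ZMod.stdAddChar (t * (n : ZMod c)) * F α β := by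
    intro α β
    simp only [hF]
    have harg1 : -2 * (u : ZMod c) * (α + t) * β
        = -2 * (u : ZMod c) * α * β + 2 * t * ((u : ZMod c) * β) := by
      linear_combination (-((u : ZMod c) * β)) * h4t
    have harg2 : (u : ZMod c) * (α + t) ^ 2
        = (u : ZMod c) * α ^ 2 + 2 * t * ((u : ZMod c) * α) := by
      linear_combination (u : ZMod c) * htt
    have harg3 : (α + t) * (n : ZMod c) + β * (m : ZMod c)
        = (α * (n : ZMod c) + β * (m : ZMod c)) + t * (n : ZMod c) := by ring
    conv_lhs => rw [harg1, harg2, harg3,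
      show (u : ZMod c) * β ^ 2 = (u : ZMod c) * β ^ 2 + 2 * t * (0 : ZMod c) from by ring,
      Kz_shift t hodd, AddChar.map_add_eq_mul, AddChar.map_add_eq_mul]
    by_cases hone : ZMod.stdAddChar (2 * t * ((u : ZMod c) * α ^ 2 + (u : ZMod c) * β ^ 2)) = 1
    · have e : 2 * t * ((u : ZMod c) * β) + 2 * t * ((u : ZMod c) * α + 0)
          = 2 * t * ((u : ZMod c) * α ^ 2 + (u : ZMod c) * β ^ 2) := by
        linear_combination (-1 : ZMod c) * husq α - husq β
      have hone' : ZMod.stdAddChar (2 * t * ((u : ZMod c) * β)) *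
          ZMod.stdAddChar (2 * t * ((u : ZMod c) * α + 0)) = 1 := by
        rw [← AddChar.map_add_eq_mul, e]; exact hone
      linear_combination (ZMod.stdAddChar (-2 * (u : ZMod c) * α * β) *
        Kz c ((u : ZMod c) * α ^ 2) ((u : ZMod c) * β ^ 2) *
        ZMod.stdAddChar (α * (n : ZMod c) + β * (m : ZMod c)) *
        ZMod.stdAddChar (t * (n : ZMod c))) * hone'
    · rw [Kz_eq_zero t h4t hodd hone]
      ring
  -- β-shift
  have hshiftb : ∀ α β : ZMod c, F α (β + t) = ZMod.stdAddChar (t * (m : ZMod c)) * F α β := by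
    intro α β
    simp only [hF]
    have harg1 : -2 * (u : ZMod c) * α * (β + t)
        = -2 * (u : ZMod c) * α * β + 2 * t * ((u : ZMod c) * α) := by
      linear_combination (-((u : ZMod c) * α)) * h4t
    have harg2 : (u : ZMod c) * (β + t) ^ 2
        = (u : ZMod c) * β ^ 2 + 2 * t * ((u : ZMod c) * β) := by
      linear_combination (u : ZMod c) * htt
    have harg3 : α * (n : ZMod c) + (β + t) * (m : ZMod c)
        = (α * (n : ZMod c) + β * (m : ZMod c)) + t * (m : ZMod c) := by ring
    conv_lhs => rw [harg1, harg2, harg3,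
      show (u : ZMod c) * α ^ 2 = (u : ZMod c) * α ^ 2 + 2 * t * (0 : ZMod c) from by ring,
      Kz_shift t hodd, AddChar.map_add_eq_mul, AddChar.map_add_eq_mul]
    by_cases hone : ZMod.stdAddChar (2 * t * ((u : ZMod c) * α ^ 2 + (u : ZMod c) * β ^ 2)) = 1
    · have e : 2 * t * ((u : ZMod c) * α) + 2 * t * (0 + (u : ZMod c) * β)
          = 2 * t * ((u : ZMod c) * α ^ 2 + (u : ZMod c) * β ^ 2) := by
        linear_combination (-1 : ZMod c) * husq α - husq β
      have hone' : ZMod.stdAddChar (2 * t * ((u : ZMod c) * α)) *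
          ZMod.stdAddChar (2 * t * (0 + (u : ZMod c) * β)) = 1 := by
        rw [← AddChar.map_add_eq_mul, e]; exact hone
      linear_combination (ZMod.stdAddChar (-2 * (u : ZMod c) * α * β) *
        Kz c ((u : ZMod c) * α ^ 2) ((u : ZMod c) * β ^ 2) *
        ZMod.stdAddChar (α * (n : ZMod c) + β * (m : ZMod c)) *
        ZMod.stdAddChar (t * (m : ZMod c))) * hone'
    · rw [Kz_eq_zero t h4t hodd hone]
      ring
  have key1 : ZMod.stdAddChar (t * (n : ZMod c)) * Bz c u n m = Bz c u n m := by
    calc ZMod.stdAddChar (t * (n : ZMod c)) * Bz c u n m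
        = ∑ α : ZMod c, ∑ β : ZMod c, ZMod.stdAddChar (t * (n : ZMod c)) * F α β := by
          rw [hBz, Finset.mul_sum]
          exact Finset.sum_congr rfl fun α _ => Finset.mul_sum _ _ _
      _ = ∑ α : ZMod c, ∑ β : ZMod c, F (α + t) β :=
          Finset.sum_congr rfl fun α _ => Finset.sum_congr rfl fun β _ => (hshifta α β).symm
      _ = ∑ α : ZMod c, ∑ β : ZMod c, F α β := by
          refine Fintype.sum_equiv (Equiv.addRight t) _ _ fun α => ?_
          rw [Equiv.coe_addRight]
      _ = Bz c u n m := hBz.symm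
  have key2 : ZMod.stdAddChar (t * (m : ZMod c)) * Bz c u n m = Bz c u n m := by
    calc ZMod.stdAddChar (t * (m : ZMod c)) * Bz c u n m
        = ∑ α : ZMod c, ∑ β : ZMod c, ZMod.stdAddChar (t * (m : ZMod c)) * F α β := by
          rw [hBz, Finset.mul_sum]
          exact Finset.sum_congr rfl fun α _ => Finset.mul_sum _ _ _
      _ = ∑ α : ZMod c, ∑ β : ZMod c, F α (β + t) :=
          Finset.sum_congr rfl fun α _ => Finset.sum_congr rfl fun β _ => (hshiftb α β).symm
      _ = ∑ α : ZMod c, ∑ β : ZMod c, F α β :=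
          Finset.sum_congr rfl fun α _ => Fintype.sum_equiv (Equiv.addRight t) _ _
            fun β => by rw [Equiv.coe_addRight]
      _ = Bz c u n m := hBz.symm
  have hψt : ZMod.stdAddChar t = Complex.I := by
    have hcast : (((4 * K : ℕ) : ℤ) : ZMod c) = t := by rw [htdef]; push_cast; ring
    rw [← hcast, ZMod.stdAddChar_coe]
    have hKne : (K : ℂ) ≠ 0 := Nat.cast_ne_zero.mpr hK0
    have hcc : (c : ℂ) = 16 * (K : ℂ) := by rw [hc16]; push_cast; ring
    rw [hcc]
    have harg : 2 * (Real.pi : ℂ) * Complex.I * (((4 * K : ℕ) : ℤ) : ℂ) / (16 * (K : ℂ))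
        = ((Real.pi : ℂ) / 2) * Complex.I := by
      push_cast
      field_simp
      ring
    rw [harg, Complex.exp_mul_I, Complex.cos_pi_div_two, Complex.sin_pi_div_two]
    ring
  have hdvd4 : ∀ k : ℤ, ZMod.stdAddChar (t * (k : ZMod c)) = 1 → (4 : ℤ) ∣ k := by
    intro k hk
    apply I_zpow_eq_one
    have ht2 : t * (k : ZMod c) = k • t := by rw [zsmul_eq_mul]; ring
    rw [← hψt, ← AddChar.map_zsmul_eq_zpow, ← ht2]
    exact hk
  have h4n : (4 : ℤ) ∣ n := by
    refine hdvd4 n (mul_right_cancel₀ hBz0 ?_)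
    rw [key1, one_mul]
  have h4m : (4 : ℤ) ∣ m := by
    refine hdvd4 m (mul_right_cancel₀ hBz0 ?_)
    rw [key2, one_mul]
  -- gcd part
  have hex : ∃ x : (ZMod c)ˣ,
      (m : ZMod c) + ((x⁻¹ : (ZMod c)ˣ) : ZMod c) * (n : ZMod c) = 0 := by
    by_contra hno
    push_neg at hno
    apply hBz0
    calc Bz c u n m
        = ∑ α : ZMod c, ∑ β : ZMod c,
            ZMod.stdAddChar (-2 * (u : ZMod c) * α * β) *
            Kz c ((u : ZMod c) * α ^ 2) ((u : ZMod c) * β ^ 2) *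
            ZMod.stdAddChar (α * (n : ZMod c) + β * (m : ZMod c)) := rfl
      _ = ∑ α : ZMod c, ∑ β : ZMod c, ∑ x : (ZMod c)ˣ,
            ZMod.stdAddChar ((u : ZMod c) * α ^ 2 * (x : ZMod c)
              + (u : ZMod c) * β ^ 2 * ((x⁻¹ : (ZMod c)ˣ) : ZMod c)
              + -2 * (u : ZMod c) * α * β + (α * (n : ZMod c) + β * (m : ZMod c))) :=
          Finset.sum_congr rfl fun α _ => Finset.sum_congr rfl fun β _ => mul_Kz_mul _ _ _ _
      _ = ∑ α : ZMod c, ∑ x : (ZMod c)ˣ, ∑ β : ZMod c,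
            ZMod.stdAddChar ((u : ZMod c) * α ^ 2 * (x : ZMod c)
              + (u : ZMod c) * β ^ 2 * ((x⁻¹ : (ZMod c)ˣ) : ZMod c)
              + -2 * (u : ZMod c) * α * β + (α * (n : ZMod c) + β * (m : ZMod c))) :=
          Finset.sum_congr rfl fun α _ => Finset.sum_comm
      _ = ∑ x : (ZMod c)ˣ, ∑ α : ZMod c, ∑ β : ZMod c,
            ZMod.stdAddChar ((u : ZMod c) * α ^ 2 * (x : ZMod c)
              + (u : ZMod c) * β ^ 2 * ((x⁻¹ : (ZMod c)ˣ) : ZMod c)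
              + -2 * (u : ZMod c) * α * β + (α * (n : ZMod c) + β * (m : ZMod c))) :=
          Finset.sum_comm
      _ = ∑ x : (ZMod c)ˣ, ∑ β : ZMod c, ∑ α : ZMod c,
            ZMod.stdAddChar ((u : ZMod c) * α ^ 2 * (x : ZMod c)
              + (u : ZMod c) * β ^ 2 * ((x⁻¹ : (ZMod c)ˣ) : ZMod c)
              + -2 * (u : ZMod c) * α * β + (α * (n : ZMod c) + β * (m : ZMod c))) :=
          Finset.sum_congr rfl fun x _ => Finset.sum_comm
      _ = ∑ x : (ZMod c)ˣ, ∑ β : ZMod c,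
            ZMod.stdAddChar (β * ((m : ZMod c) + ((x⁻¹ : (ZMod c)ˣ) : ZMod c) * (n : ZMod c))) *
            ∑ α : ZMod c, ZMod.stdAddChar ((u : ZMod c) * α ^ 2 * (x : ZMod c)
              + α * (n : ZMod c)) := by
          refine Finset.sum_congr rfl fun x _ => Finset.sum_congr rfl fun β _ => ?_
          rw [Finset.mul_sum]
          refine (Fintype.sum_equiv
            (Equiv.addRight (((x⁻¹ : (ZMod c)ˣ) : ZMod c) * β))
            (fun α => ZMod.stdAddChar
              (β * ((m : ZMod c) + ((x⁻¹ : (ZMod c)ˣ) : ZMod c) * (n : ZMod c))) *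
              ZMod.stdAddChar ((u : ZMod c) * α ^ 2 * (x : ZMod c) + α * (n : ZMod c)))
            (fun α => ZMod.stdAddChar ((u : ZMod c) * α ^ 2 * (x : ZMod c)
              + (u : ZMod c) * β ^ 2 * ((x⁻¹ : (ZMod c)ˣ) : ZMod c)
              + -2 * (u : ZMod c) * α * β + (α * (n : ZMod c) + β * (m : ZMod c))))
            (fun α => ?_)).symm
          simp only [Equiv.coe_addRight]
          rw [← AddChar.map_add_eq_mul]
          congr 1
          have hxinv : (x : ZMod c) * ((x⁻¹ : (ZMod c)ˣ) : ZMod c) = 1 := x.mul_inv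
          linear_combination (-(2 * (u : ZMod c) * α * β
            + (u : ZMod c) * ((x⁻¹ : (ZMod c)ˣ) : ZMod c) * β ^ 2)) * hxinv
      _ = ∑ x : (ZMod c)ˣ,
            (∑ β : ZMod c, ZMod.stdAddChar
              (β * ((m : ZMod c) + ((x⁻¹ : (ZMod c)ˣ) : ZMod c) * (n : ZMod c)))) *
            ∑ α : ZMod c, ZMod.stdAddChar ((u : ZMod c) * α ^ 2 * (x : ZMod c)
              + α * (n : ZMod c)) :=
          Finset.sum_congr rfl fun x _ => by rw [← Finset.sum_mul]
      _ = 0 := Finset.sum_eq_zero fun x _ => by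
          rw [sum_char_mul_eq_zero (hno x), zero_mul]
  obtain ⟨x, hx⟩ := hex
  have hxinv : (x : ZMod c) * ((x⁻¹ : (ZMod c)ˣ) : ZMod c) = 1 := x.mul_inv
  have h2 : (n : ZMod c) = -(x : ZMod c) * (m : ZMod c) := by
    linear_combination (x : ZMod c) * hx + (-(n : ZMod c)) * hxinv
  have h3 : (m : ZMod c) = -((x⁻¹ : (ZMod c)ˣ) : ZMod c) * (n : ZMod c) := by
    linear_combination hx
  have hcong1 : (c : ℤ) ∣ n - ((-(x : ZMod c)).val : ℤ) * m := by
    have hv1 : ((((-(x : ZMod c)).val : ℕ) : ZMod c)) = -(x : ZMod c) :=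
      ZMod.natCast_rightInverse _
    have he1 : ((n : ℤ) : ZMod c) = ((((-(x : ZMod c)).val : ℕ) : ℤ) * m : ℤ) := by
      push_cast
      rw [hv1]
      exact h2
    have hmod := (ZMod.intCast_eq_intCast_iff _ _ _).mp he1
    exact dvd_sub_comm.mp (Int.ModEq.dvd hmod)
  have hcong2 : (c : ℤ) ∣ m - ((-((x⁻¹ : (ZMod c)ˣ) : ZMod c)).val : ℤ) * n := by
    have hv1 : ((((-((x⁻¹ : (ZMod c)ˣ) : ZMod c)).val : ℕ) : ZMod c))
        = -((x⁻¹ : (ZMod c)ˣ) : ZMod c) := ZMod.natCast_rightInverse _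
    have he1 : ((m : ℤ) : ZMod c)
        = ((((-((x⁻¹ : (ZMod c)ˣ) : ZMod c)).val : ℕ) : ℤ) * n : ℤ) := by
      push_cast
      rw [hv1]
      exact h3
    have hmod := (ZMod.intCast_eq_intCast_iff _ _ _).mp he1
    exact dvd_sub_comm.mp (Int.ModEq.dvd hmod)
  constructor
  · have h4 : (4 : ℤ) ∣ (Int.gcd n m : ℤ) := Int.dvd_coe_gcd h4n h4m
    exact_mod_cast h4
  · have hdvd1 : Int.gcd n (c : ℤ) ∣ Int.gcd m (c : ℤ) := by
      have h1 : (↑(Int.gcd n (c : ℤ)) : ℤ) ∣ m := by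
        obtain ⟨k2, hk2⟩ := hcong2
        have hm : m = ((-((x⁻¹ : (ZMod c)ˣ) : ZMod c)).val : ℤ) * n + (c : ℤ) * k2 := by
          linarith
        rw [hm]
        exact dvd_add (Dvd.dvd.mul_left (Int.gcd_dvd_left _ _) _)
          (Dvd.dvd.mul_right (Int.gcd_dvd_right _ _) k2)
      have h2' : (↑(Int.gcd n (c : ℤ)) : ℤ) ∣ (↑(Int.gcd m (c : ℤ)) : ℤ) :=
        Int.dvd_coe_gcd h1 (Int.gcd_dvd_right _ _)
      exact_mod_cast h2'
    have hdvd2 : Int.gcd m (c : ℤ) ∣ Int.gcd n (c : ℤ) := by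
      have h1 : (↑(Int.gcd m (c : ℤ)) : ℤ) ∣ n := by
        obtain ⟨k2, hk2⟩ := hcong1
        have hn : n = ((-(x : ZMod c)).val : ℤ) * m + (c : ℤ) * k2 := by
          linarith
        rw [hn]
        exact dvd_add (Dvd.dvd.mul_left (Int.gcd_dvd_left _ _) _)
          (Dvd.dvd.mul_right (Int.gcd_dvd_right _ _) k2)
      have h2' : (↑(Int.gcd m (c : ℤ)) : ℤ) ∣ (↑(Int.gcd n (c : ℤ)) : ℤ) :=
        Int.dvd_coe_gcd h1 (Int.gcd_dvd_right _ _)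
      exact_mod_cast h2'
    exact Nat.dvd_antisymm hdvd1 hdvd2
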